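/- Let 0 < α < 1/2 and let 2α < γ < 1. Assume the localization estimate: there exist constants C, c > 0 such that for all N and all x, y ∈ {1,…,N}, 𝖤( Σ_{k ∈ I(α)} |ψ^k_x ψ^k_y| ) ≤ C e^{−c|x−y|/N^{2α}}, where I(α) = (N^{1−α}, N−1] ∩ ℤ. Then, almost surely, there exists N₀ ∈ ℕ such that for all N ≥ N₀ and for all k ∈ I(α), there exists an interval J(k) ⊂ ℝ with |J(k)| ≤ 2N^γ such that |ψ^k_x| ≤ N^{−1/γ} for all x ∈ {1,…,N} \\ J(k). -/

import Mathlib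

open Finset Filter MeasureTheory ProbabilityTheory
open Topology Asymptotics Real

/-- Eigenmodes of the operator `M⁻¹(−Δ)` with free boundary conditions
(`ψ_0 = ψ_1`, `ψ_{N+1} = ψ_N`), normalized by `⟨ψ^j, Mψ^k⟩ = δ_{jk}`, with `ω_0 = 0` and
`ω_k > 0` for `1 ≤ k ≤ N−1`. -/
def IsEigenSystem (N : ℕ) (m : ℕ → ℝ) (ψ : ℕ → ℕ → ℝ) (W : ℕ → ℝ) : Prop :=
  (∀ k ≤ N - 1, ψ k 0 = ψ k 1 ∧ ψ k (N + 1) = ψ k N) ∧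
  (∀ k ≤ N - 1, ∀ x : ℕ, 1 ≤ x → x ≤ N →
    -(ψ k (x + 1) - 2 * ψ k x + ψ k (x - 1)) = (W k) ^ 2 * (m x * ψ k x)) ∧
  (∀ j ≤ N - 1, ∀ k ≤ N - 1,
    (∑ x ∈ Finset.Icc 1 N, m x * ψ j x * ψ k x) = if j = k then 1 else 0) ∧
  W 0 = 0 ∧ (∀ k : ℕ, 1 ≤ k → k ≤ N - 1 → 0 < W k)

namespace Stmt17Aux
open scoped Classical

noncomputable section

open Real Topology

/-- Solution of the three-term recurrence with free left boundary condition. -/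
def pseq (l : ℝ) (m : ℕ → ℝ) : ℕ → ℝ
  | 0 => 1
  | 1 => 1
  | (x+2) => (2 - l * m (x+1)) * pseq l m (x+1) - pseq l m x

@[simp] lemma pseq_zero (l : ℝ) (m : ℕ → ℝ) : pseq l m 0 = 1 := rfl
@[simp] lemma pseq_one (l : ℝ) (m : ℕ → ℝ) : pseq l m 1 = 1 := rfl
lemma pseq_succ_succ (l : ℝ) (m : ℕ → ℝ) (x : ℕ) :
    pseq l m (x+2) = (2 - l * m (x+1)) * pseq l m (x+1) - pseq l m x := rfl

lemma psi_eq {N : ℕ} {m : ℕ → ℝ} {ψ : ℕ → ℕ → ℝ} {W : ℕ → ℝ}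
    (h : IsEigenSystem N m ψ W) {k : ℕ} (hk : k ≤ N - 1) :
    ∀ x, x ≤ N → ψ k x = ψ k 1 * pseq (W k ^ 2) m x := by
  intro x
  induction x using Nat.strong_induction_on with
  | _ x ih =>
    match x with
    | 0 => intro _; rw [(h.1 k hk).1]; simp
    | 1 => intro _; simp
    | (x+2) =>
      intro hx2
      have h1 : ψ k (x+1) = ψ k 1 * pseq (W k ^ 2) m (x+1) := ih (x+1) (by omega) (by omega)
      have h0 : ψ k x = ψ k 1 * pseq (W k ^ 2) m x := ih x (by omega) (by omega)
      have he := h.2.1 k hk (x+1) (by omega) (by omega)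
      have hx1 : (x + 1 - 1) = x := by omega
      rw [hx1] at he
      rw [pseq_succ_succ]
      have hstep : ψ k (x+1+1) = (2 - W k ^ 2 * m (x+1)) * ψ k (x+1) - ψ k x := by
        nlinarith [he]
      rw [show x+2 = x+1+1 from rfl, hstep, h1, h0]; ring

lemma S_ge {N : ℕ} {mm : ℝ} {m : ℕ → ℝ} (hm : ∀ x, mm ≤ m x) (hmm : 0 < mm)
    (hN : 1 ≤ N) (l : ℝ) :
    mm ≤ ∑ x ∈ Icc 1 N, m x * pseq l m x ^ 2 := by
  have h1 : (1:ℕ) ∈ Icc 1 N := by simp [hN]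
  have h2 : mm = mm * pseq l m 1 ^ 2 := by simp
  calc mm = mm * pseq l m 1 ^ 2 := h2
    _ ≤ m 1 * pseq l m 1 ^ 2 := by nlinarith [hm 1]
    _ ≤ ∑ x ∈ Icc 1 N, m x * pseq l m x ^ 2 := by
        apply Finset.single_le_sum (f := fun x => m x * pseq l m x ^ 2) _ h1
        intro i _
        exact mul_nonneg (le_trans hmm.le (hm i)) (sq_nonneg _)

lemma norm_eq {N : ℕ} {m : ℕ → ℝ} {ψ : ℕ → ℕ → ℝ} {W : ℕ → ℝ}
    (h : IsEigenSystem N m ψ W) {k : ℕ} (hk : k ≤ N - 1) :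
    ψ k 1 ^ 2 * (∑ x ∈ Icc 1 N, m x * pseq (W k ^ 2) m x ^ 2) = 1 := by
  have ho := h.2.2.1 k hk k hk
  simp only [if_pos rfl, if_true, eq_self_iff_true] at ho
  have hcongr : ∀ x ∈ Icc 1 N,
      ψ k 1 ^ 2 * (m x * pseq (W k ^ 2) m x ^ 2) = m x * ψ k x * ψ k x := by
    intro x hx
    rw [psi_eq h hk x (Finset.mem_Icc.mp hx).2]; ring
  calc ψ k 1 ^ 2 * (∑ x ∈ Icc 1 N, m x * pseq (W k ^ 2) m x ^ 2)
      = ∑ x ∈ Icc 1 N, ψ k 1 ^ 2 * (m x * pseq (W k ^ 2) m x ^ 2) := Finset.mul_sum _ _ _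
    _ = ∑ x ∈ Icc 1 N, m x * ψ k x * ψ k x := Finset.sum_congr rfl hcongr
    _ = 1 := ho

lemma psi_mul {N : ℕ} {mm : ℝ} {m : ℕ → ℝ} {ψ : ℕ → ℕ → ℝ} {W : ℕ → ℝ}
    (h : IsEigenSystem N m ψ W) (hm : ∀ x, mm ≤ m x) (hmm : 0 < mm) (hN : 1 ≤ N)
    {k : ℕ} (hk : k ≤ N - 1) {x y : ℕ} (hx : x ≤ N) (hy : y ≤ N) :
    ψ k x * ψ k y = pseq (W k ^ 2) m x * pseq (W k ^ 2) m y /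
      (∑ z ∈ Icc 1 N, m z * pseq (W k ^ 2) m z ^ 2) := by
  have hS : 0 < ∑ z ∈ Icc 1 N, m z * pseq (W k ^ 2) m z ^ 2 :=
    lt_of_lt_of_le hmm (S_ge hm hmm hN _)
  have h1 := norm_eq h hk
  rw [psi_eq h hk x hx, psi_eq h hk y hy]
  field_simp
  linear_combination pseq (W k ^ 2) m x * pseq (W k ^ 2) m y * h1

lemma psi_sq_le {N : ℕ} {mm : ℝ} {m : ℕ → ℝ} {ψ : ℕ → ℕ → ℝ} {W : ℕ → ℝ}
    (h : IsEigenSystem N m ψ W) (hm : ∀ x, mm ≤ m x) (hmm : 0 < mm)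
    {k : ℕ} (hk : k ≤ N - 1) {x : ℕ} (hx : x ∈ Icc 1 N) :
    ψ k x ^ 2 ≤ 1 / mm := by
  have ho := h.2.2.1 k hk k hk
  simp only [if_pos rfl, if_true, eq_self_iff_true] at ho
  have hterm : m x * ψ k x * ψ k x ≤ 1 := by
    rw [← ho]
    apply Finset.single_le_sum (f := fun i => m i * ψ k i * ψ k i) _ hx
    intro i _
    show 0 ≤ m i * ψ k i * ψ k i
    nlinarith [hm i, sq_nonneg (ψ k i)]
  have hmx : mm ≤ m x := hm x
  rw [le_div_iff₀ hmm]
  nlinarith [sq_nonneg (ψ k x)]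

/-- The matrix entries of `−Δ` with free boundary conditions, with sites `1,…,N`. -/
def bmat (N s i : ℕ) : ℝ :=
  (if s = i then (2:ℝ) - (if s = 1 then 1 else 0) - (if s = N then 1 else 0) else 0)
  - (if s + 1 = i then 1 else 0) - (if i + 1 = s then 1 else 0)

lemma bmat_row {N : ℕ} (hN : 2 ≤ N) (v : ℕ → ℝ) (hv0 : v 0 = v 1) (hvN : v (N+1) = v N)
    {s : ℕ} (hs1 : 1 ≤ s) (hsN : s ≤ N) (r : ℝ)
    (heq : -(v (s+1) - 2 * v s + v (s-1)) = r) :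
    ∑ i ∈ Icc 1 N, bmat N s i * v i = r := by
  classical
  obtain ⟨t, rfl⟩ : ∃ t, s = t + 1 := ⟨s - 1, by omega⟩
  have hsummand : ∀ i, bmat N (t+1) i * v i =
      (if t + 1 = i then ((2:ℝ) - (if t + 1 = 1 then 1 else 0) - (if t + 1 = N then 1 else 0)) * v i else 0)
      - (if t + 1 + 1 = i then v i else 0) - (if i + 1 = t + 1 then v i else 0) := by
    intro i; unfold bmat; split_ifs <;> ring
  rw [Finset.sum_congr rfl (fun i _ => hsummand i), Finset.sum_sub_distrib,
    Finset.sum_sub_distrib]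
  have e1 : ∑ i ∈ Icc 1 N,
      (if t + 1 = i then ((2:ℝ) - (if t + 1 = 1 then 1 else 0) - (if t + 1 = N then 1 else 0)) * v i else 0)
      = ((2:ℝ) - (if t + 1 = 1 then 1 else 0) - (if t + 1 = N then 1 else 0)) * v (t+1) := by
    rw [Finset.sum_ite_eq]
    simp only [Finset.mem_Icc]
    rw [if_pos (by omega)]
  have e2 : ∑ i ∈ Icc 1 N, (if t + 1 + 1 = i then v i else 0)
      = if t + 2 ≤ N then v (t+2) else 0 := by
    rw [Finset.sum_ite_eq]
    simp only [Finset.mem_Icc]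
    by_cases h2 : t + 2 ≤ N
    · rw [if_pos (by omega), if_pos h2]
    · rw [if_neg (by omega), if_neg h2]
  have e3 : ∑ i ∈ Icc 1 N, (if i + 1 = t + 1 then v i else 0)
      = if 1 ≤ t then v t else 0 := by
    have : ∀ i, (if i + 1 = t + 1 then v i else 0) = (if i = t then v i else 0) := by
      intro i; by_cases h : i = t
      · rw [if_pos (by omega), if_pos h]
      · rw [if_neg (by omega), if_neg h]
    rw [Finset.sum_congr rfl (fun i _ => this i), Finset.sum_ite_eq']
    simp only [Finset.mem_Icc]
    by_cases h1 : 1 ≤ t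
    · rw [if_pos (by omega), if_pos h1]
    · rw [if_neg (by omega), if_neg h1]
  rw [e1, e2, e3]
  by_cases hA : t = 0
  · rw [if_pos (by omega : t + 1 = 1), if_neg (by omega : ¬ t + 1 = N),
      if_pos (by omega : t + 2 ≤ N), if_neg (by omega : ¬ 1 ≤ t)]
    have k1 : t + 1 + 1 = t + 2 := by omega
    have k2 : t + 1 - 1 = 0 := by omega
    rw [k1, k2] at heq
    have hv01 : v 0 = v (t + 1) := by rw [hv0, show t + 1 = 1 by omega]
    linarith [heq, hv01]
  · by_cases hB : t + 1 = N
    · rw [if_neg (by omega : ¬ t + 1 = 1), if_pos hB, if_neg (by omega : ¬ t + 2 ≤ N),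
        if_pos (by omega : 1 ≤ t)]
      have k1 : t + 1 + 1 = N + 1 := by omega
      have k2 : t + 1 - 1 = t := by omega
      rw [k1, k2, hvN] at heq
      have hvv : v N = v (t + 1) := by rw [hB]
      linarith [heq, hvv]
    · rw [if_neg (by omega : ¬ t + 1 = 1), if_neg hB, if_pos (by omega : t + 2 ≤ N),
        if_pos (by omega : 1 ≤ t)]
      have k1 : t + 1 + 1 = t + 2 := by omega
      have k2 : t + 1 - 1 = t := by omega
      rw [k1, k2] at heq
      linarith [heq]

/-- The matrix `M⁻¹(−Δ)` (with free boundary conditions) on `Fin N`. -/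
def Amat (N : ℕ) (m : ℕ → ℝ) : Matrix (Fin N) (Fin N) ℝ :=
  Matrix.of fun x y => bmat N (x.val+1) (y.val+1) / m (x.val+1)

lemma sum_Icc_eq_fin {M : Type*} [AddCommMonoid M] (N : ℕ) (f : ℕ → M) :
    ∑ x ∈ Icc 1 N, f x = ∑ x : Fin N, f (x.val + 1) := by
  rw [Fin.sum_univ_eq_sum_range (fun i => f (i + 1)) N]
  rw [← Finset.Ico_add_one_right_eq_Icc, Finset.sum_Ico_eq_sum_range]
  refine Finset.sum_congr (by norm_num) fun i _ => by rw [Nat.add_comm]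

lemma trace_Amat_pow {N : ℕ} {m : ℕ → ℝ} {ψ : ℕ → ℕ → ℝ} {W : ℕ → ℝ}
    (hN : 2 ≤ N) (h : IsEigenSystem N m ψ W) (hm0 : ∀ x, 0 < m x) (n : ℕ) :
    Matrix.trace (Amat N m ^ n) = ∑ k ∈ range N, ((W k) ^ 2) ^ n := by
  classical
  set Q : Matrix (Fin N) (Fin N) ℝ := Matrix.of fun x k => ψ k.val (x.val+1) with hQdef
  set R : Matrix (Fin N) (Fin N) ℝ :=
    Matrix.of fun k x => m (x.val+1) * ψ k.val (x.val+1) with hRdef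
  set D : Matrix (Fin N) (Fin N) ℝ := Matrix.diagonal (fun k : Fin N => (W k.val) ^ 2) with hDdef
  have hRQ : R * Q = 1 := by
    ext j k
    rw [Matrix.mul_apply, Matrix.one_apply]
    have ho := h.2.2.1 j.val (by omega) k.val (by omega)
    rw [sum_Icc_eq_fin N (fun x => m x * ψ j.val x * ψ k.val x)] at ho
    have : ∀ y : Fin N, R j y * Q y k
        = m (y.val+1) * ψ j.val (y.val+1) * ψ k.val (y.val+1) := by
      intro y; simp only [hRdef, hQdef, Matrix.of_apply]
    rw [Finset.sum_congr rfl (fun y _ => this y), ho]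
    by_cases hjk : j = k
    · subst hjk; simp
    · simp only [if_neg hjk, if_neg (fun hv => hjk (Fin.ext hv))]
  have hQR : Q * R = 1 := mul_eq_one_comm.mp hRQ
  have hAQ : Amat N m * Q = Q * D := by
    ext x k
    rw [Matrix.mul_apply, hDdef, Matrix.mul_diagonal]
    have hk' : k.val ≤ N - 1 := by omega
    have hrow := bmat_row hN (ψ k.val) ((h.1 k.val hk').1) ((h.1 k.val hk').2)
      (show 1 ≤ x.val + 1 by omega) (show x.val + 1 ≤ N by omega) _
      (h.2.1 k.val hk' (x.val+1) (by omega) (by omega))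
    rw [sum_Icc_eq_fin N (fun i => bmat N (x.val+1) i * ψ k.val i)] at hrow
    have hm' : m (x.val+1) ≠ 0 := (hm0 (x.val+1)).ne'
    have hterm : ∀ y : Fin N, Amat N m x y * Q y k
        = bmat N (x.val+1) (y.val+1) * ψ k.val (y.val+1) / m (x.val+1) := by
      intro y; simp only [Amat, hQdef, Matrix.of_apply]; ring
    rw [Finset.sum_congr rfl (fun y _ => hterm y), ← Finset.sum_div, hrow]
    simp only [hQdef, Matrix.of_apply]
    field_simp
  have hA : Amat N m = Q * D * R := by
    rw [← hAQ, Matrix.mul_assoc, hQR, Matrix.mul_one]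
  have hApow : ∀ j : ℕ, Amat N m ^ j = Q * D ^ j * R := by
    intro j
    induction j with
    | zero => rw [pow_zero, pow_zero, Matrix.mul_one, hQR]
    | succ j ih =>
      rw [pow_succ, ih, hA, pow_succ]
      have hmid : R * (Q * (D * R)) = D * R := by
        rw [← Matrix.mul_assoc, hRQ, Matrix.one_mul]
      simp only [Matrix.mul_assoc]
      rw [hmid]
  rw [hApow n, Matrix.trace_mul_comm, ← Matrix.mul_assoc, hRQ, Matrix.one_mul,
    hDdef, Matrix.diagonal_pow, Matrix.trace_diagonal]
  simp only [Pi.pow_apply]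
  exact Fin.sum_univ_eq_sum_range (fun k => ((W k) ^ 2) ^ n) N

section Meas

variable {Ω : Type*} [MeasurableSpace Ω]

lemma meas_Apow (N : ℕ) (m : ℕ → Ω → ℝ) (hm : ∀ i, Measurable (m i)) :
    ∀ (n : ℕ) (x y : Fin N), Measurable fun ω => ((Amat N fun i => m i ω) ^ n) x y := by
  intro n
  induction n with
  | zero =>
    intro x y
    simp only [pow_zero, Matrix.one_apply]
    exact measurable_const
  | succ n ih =>
    intro x y
    simp only [pow_succ, Matrix.mul_apply, Amat, Matrix.of_apply]
    apply Finset.measurable_sum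
    intro j _
    exact (ih x j).mul (measurable_const.div (hm _))

lemma meas_trace (N : ℕ) (m : ℕ → Ω → ℝ) (hm : ∀ i, Measurable (m i)) (n : ℕ) :
    Measurable fun ω => Matrix.trace ((Amat N fun i => m i ω) ^ n) := by
  have hrfl : (fun ω => Matrix.trace ((Amat N fun i => m i ω) ^ n))
      = fun ω => ∑ x : Fin N, ((Amat N fun i => m i ω) ^ n) x x := rfl
  rw [hrfl]
  exact Finset.measurable_sum _ fun x _ => meas_Apow N m hm n x x

lemma pseq_meas (m : ℕ → Ω → ℝ) (hm : ∀ i, Measurable (m i))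
    (l : Ω → ℝ) (hl : Measurable l) :
    ∀ x : ℕ, Measurable fun ω => pseq (l ω) (fun i => m i ω) x := by
  intro x
  induction x using Nat.strong_induction_on with
  | _ x ih =>
    match x with
    | 0 => simp only [pseq_zero]; exact measurable_const
    | 1 => simp only [pseq_one]; exact measurable_const
    | (x+2) =>
      simp only [pseq_succ_succ]
      exact ((measurable_const.sub (hl.mul (hm _))).mul (ih (x+1) (by omega))).sub
        (ih x (by omega))

lemma lam_meas {N : ℕ} (hN : 2 ≤ N)
    (m : ℕ → Ω → ℝ) (hm : ∀ i, Measurable (m i)) (hm0 : ∀ i ω, 0 < m i ω)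
    (ψ : Ω → ℕ → ℕ → ℝ) (W : Ω → ℕ → ℝ)
    (heig : ∀ ω, IsEigenSystem N (fun x => m x ω) (ψ ω) (W ω))
    (hsort : ∀ ω, ∀ j k : ℕ, j ≤ k → k ≤ N - 1 → W ω j ≤ W ω k) :
    ∀ k, 1 ≤ k → k ≤ N - 1 → Measurable fun ω => (W ω k) ^ 2 := by
  have hWnn : ∀ ω, ∀ k, k ≤ N - 1 → 0 ≤ W ω k := by
    intro ω k hk
    rcases Nat.eq_zero_or_pos k with h0 | h1
    · subst h0; rw [(heig ω).2.2.2.1]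
    · exact ((heig ω).2.2.2.2 k h1 hk).le
  have hlam_sorted : ∀ ω, ∀ j k : ℕ, j ≤ k → k ≤ N - 1 → (W ω j) ^ 2 ≤ (W ω k) ^ 2 :=
    fun ω j k hjk hk =>
      pow_le_pow_left₀ (hWnn ω j (le_trans hjk hk)) (hsort ω j k hjk hk) 2
  have htr : ∀ ω, ∀ n : ℕ,
      (∑ i ∈ range N, ((W ω i) ^ 2) ^ n) = Matrix.trace ((Amat N fun i => m i ω) ^ n) :=
    fun ω n => (trace_Amat_pow hN (heig ω) (fun x => hm0 x ω) n).symm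
  suffices H : ∀ d k, 1 ≤ k → k ≤ N - 1 → N - 1 - k = d → Measurable fun ω => (W ω k) ^ 2 by
    intro k hk1 hk2; exact H _ k hk1 hk2 rfl
  intro d
  induction d using Nat.strong_induction_on with
  | _ d ih =>
    intro k hk1 hk2 hd
    have hkN : k + 1 ≤ N := by omega
    have hs_meas : ∀ n : ℕ, Measurable fun ω => ∑ i ∈ range (k+1), ((W ω i) ^ 2) ^ n := by
      intro n
      have hrw : (fun ω => ∑ i ∈ range (k+1), ((W ω i) ^ 2) ^ n)
          = fun ω => Matrix.trace ((Amat N fun i => m i ω) ^ n)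
            - ∑ i ∈ Ico (k+1) N, ((W ω i) ^ 2) ^ n := by
        funext ω
        rw [← htr ω n, ← Finset.sum_range_add_sum_Ico _ hkN]
        ring
      rw [hrw]
      apply (meas_trace N m hm n).sub
      apply Finset.measurable_sum
      intro i hi
      have hi' := Finset.mem_Ico.mp hi
      exact (ih (N - 1 - i) (by omega) i (by omega) (by omega) rfl).pow_const n
    have hlim : ∀ ω, Tendsto
        (fun n : ℕ => (∑ i ∈ range (k+1), ((W ω i) ^ 2) ^ n) ^ (1 / (n:ℝ)))
        atTop (𝓝 ((W ω k) ^ 2)) := by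
      intro ω
      set a : ℝ := (W ω k) ^ 2 with hadef
      have ha : 0 < a := by
        have := (heig ω).2.2.2.2 k hk1 hk2
        positivity
      have hlow : ∀ᶠ n : ℕ in atTop,
          a ≤ (∑ i ∈ range (k+1), ((W ω i) ^ 2) ^ n) ^ (1 / (n:ℝ)) := by
        filter_upwards [eventually_ge_atTop 1] with n hn
        have h1 : a ^ n ≤ ∑ i ∈ range (k+1), ((W ω i) ^ 2) ^ n := by
          apply Finset.single_le_sum (f := fun i => ((W ω i) ^ 2) ^ n)
            (fun i _ => pow_nonneg (sq_nonneg _) n) (Finset.self_mem_range_succ k)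
        have h2 : (a ^ n : ℝ) ^ (1 / (n:ℝ)) = a := by
          rw [← Real.rpow_natCast a n, ← Real.rpow_mul ha.le,
            mul_one_div_cancel (by exact_mod_cast Nat.one_le_iff_ne_zero.mp hn : (n:ℝ) ≠ 0),
            Real.rpow_one]
        rw [← h2]
        exact Real.rpow_le_rpow (pow_nonneg ha.le n) h1 (by positivity)
      have hup : ∀ᶠ n : ℕ in atTop,
          (∑ i ∈ range (k+1), ((W ω i) ^ 2) ^ n) ^ (1 / (n:ℝ))
            ≤ ((k:ℝ) + 1) ^ (1 / (n:ℝ)) * a := by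
        filter_upwards [eventually_ge_atTop 1] with n hn
        have hsum_nonneg : (0:ℝ) ≤ ∑ i ∈ range (k+1), ((W ω i) ^ 2) ^ n :=
          Finset.sum_nonneg fun i _ => pow_nonneg (sq_nonneg _) n
        have h1 : ∑ i ∈ range (k+1), ((W ω i) ^ 2) ^ n ≤ ((k:ℝ) + 1) * a ^ n := by
          have hcard := Finset.sum_le_card_nsmul (range (k+1)) (fun i => ((W ω i) ^ 2) ^ n)
            (a ^ n) (fun i hi => pow_le_pow_left₀ (sq_nonneg _)
              (hlam_sorted ω i k (Nat.lt_succ_iff.mp (Finset.mem_range.mp hi)) hk2) n)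
          rw [Finset.card_range, nsmul_eq_mul] at hcard
          calc ∑ i ∈ range (k+1), ((W ω i) ^ 2) ^ n ≤ ((k+1 : ℕ) : ℝ) * a ^ n := hcard
            _ = ((k:ℝ) + 1) * a ^ n := by push_cast; ring
        have hn0 : ((n:ℝ)) ≠ 0 := by exact_mod_cast Nat.one_le_iff_ne_zero.mp hn
        have h2 : (a ^ n : ℝ) ^ (1 / (n:ℝ)) = a := by
          rw [← Real.rpow_natCast a n, ← Real.rpow_mul ha.le, mul_one_div_cancel hn0,
            Real.rpow_one]
        calc (∑ i ∈ range (k+1), ((W ω i) ^ 2) ^ n) ^ (1 / (n:ℝ))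
            ≤ (((k:ℝ) + 1) * a ^ n) ^ (1 / (n:ℝ)) :=
              Real.rpow_le_rpow hsum_nonneg h1 (by positivity)
          _ = ((k:ℝ) + 1) ^ (1 / (n:ℝ)) * a := by
              rw [Real.mul_rpow (by positivity) (pow_nonneg ha.le n), h2]
      have hone : Tendsto (fun n : ℕ => ((k:ℝ) + 1) ^ (1 / (n:ℝ)) * a) atTop (𝓝 a) := by
        have hbase : Tendsto (fun n : ℕ => ((k:ℝ) + 1) ^ (1 / (n:ℝ))) atTop (𝓝 1) := by
          have h0 : Tendsto (fun n : ℕ => 1 / (n:ℝ)) atTop (𝓝 0) :=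
            tendsto_one_div_atTop_nhds_zero_nat
          have hconst : Tendsto (fun _ : ℕ => (k:ℝ) + 1) atTop (𝓝 ((k:ℝ) + 1)) :=
            tendsto_const_nhds
          have h1 := Filter.Tendsto.rpow hconst h0 (Or.inl (by positivity))
          simpa using h1
        have h2 := hbase.mul_const a
        simpa using h2
      exact tendsto_of_tendsto_of_tendsto_of_le_of_le' tendsto_const_nhds hone hlow hup
    exact measurable_of_tendsto_metrizable
      (fun n => (Real.continuous_rpow_const (by positivity)).measurable.comp (hs_meas n))
      (tendsto_pi_nhds.mpr hlim)

end Meas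

end

end Stmt17Aux

open scoped Classical in
/-- localization of the high modes.  Assuming the localization estimate
`𝖤( Σ_{k ∈ I(α)} |ψ^k_x ψ^k_y| ) ≤ C e^{−c|x−y|/N^{2α}}` with
`I(α) = (N^{1−α}, N−1] ∩ ℤ`, almost surely for all large `N` every mode `ψ^k`, `k ∈ I(α)`,
is bounded by `N^{−1/γ}` outside an interval of length `2N^γ`. -/
theorem stmt17
    {Ω : Type*} [MeasurableSpace Ω] (μ : Measure Ω) [IsProbabilityMeasure μ]
    (mminus mplus : ℝ) (hm0 : 0 < mminus)
    (m : ℕ → Ω → ℝ) (hmeas : ∀ i, Measurable (m i))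
    (hindep : iIndepFun m μ)
    (hident : ∀ i j, IdentDistrib (m i) (m j) μ μ)
    (hbdd : ∀ i ω, m i ω ∈ Set.Icc mminus mplus)
    -- the (random) eigenmodes, sorted by increasing eigenfrequency
    (ψ : (N : ℕ) → Ω → ℕ → ℕ → ℝ) (W : (N : ℕ) → Ω → ℕ → ℝ)
    (heigen : ∀ N : ℕ, 2 ≤ N → ∀ ω, IsEigenSystem N (fun x => m x ω) (ψ N ω) (W N ω))
    (hsorted : ∀ N : ℕ, 2 ≤ N → ∀ ω, ∀ j k : ℕ, j ≤ k → k ≤ N - 1 → W N ω j ≤ W N ω k)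
    (α γ : ℝ) (hα0 : 0 < α) (hα : α < 1 / 2) (hγ1 : 2 * α < γ) (hγ2 : γ < 1)
    (C c : ℝ) (hC : 0 < C) (hc : 0 < c)
    (hloc : ∀ N : ℕ, 2 ≤ N → ∀ x ∈ Finset.Icc 1 N, ∀ y ∈ Finset.Icc 1 N,
      (∫ ω, (∑ k ∈ (Finset.Icc 1 (N - 1)).filter
          (fun k : ℕ => (N : ℝ) ^ ((1 : ℝ) - α) < (k : ℝ)),
        |ψ N ω k x * ψ N ω k y|) ∂μ)
        ≤ C * Real.exp (-c * |(x : ℝ) - (y : ℝ)| / (N : ℝ) ^ (2 * α))) :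
    ∀ᵐ ω ∂μ, ∃ N₀ : ℕ, ∀ N : ℕ, N₀ ≤ N →
      ∀ k ∈ (Finset.Icc 1 (N - 1)).filter
          (fun k : ℕ => (N : ℝ) ^ ((1 : ℝ) - α) < (k : ℝ)),
        ∃ x₀ : ℝ, ∀ x : ℕ, 1 ≤ x → x ≤ N → (N : ℝ) ^ γ < |(x : ℝ) - x₀| →
          |ψ N ω k x| ≤ (N : ℝ) ^ (-(1 : ℝ) / γ) := by
  classical
  have hmpos : ∀ i ω, 0 < m i ω := fun i ω => lt_of_lt_of_le hm0 (hbdd i ω).1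
  have hmlow : ∀ ω i, mminus ≤ m i ω := fun ω i => (hbdd i ω).1
  have hγ0 : 0 < γ := by linarith
  set δ : ℝ := γ - 2*α with hδdef
  have hδ0 : 0 < δ := by rw [hδdef]; linarith
  set term : ℕ → ℝ :=
    fun N => (N:ℝ)^2 * (C * Real.exp (-c * (N:ℝ)^δ) * (N:ℝ)^((2:ℝ)/γ)) with htermdef
  have hterm_nonneg : ∀ N, 0 ≤ term N := by
    intro N; rw [htermdef]
    positivity
  set bad : ℕ → Set Ω := fun N => {ω | ∃ k ∈ (Finset.Icc 1 (N-1)).filter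
      (fun k : ℕ => (N:ℝ)^((1:ℝ)-α) < (k:ℝ)), ∃ x ∈ Finset.Icc 1 N, ∃ y ∈ Finset.Icc 1 N,
      (N:ℝ)^γ < |(x:ℝ) - (y:ℝ)| ∧ (N:ℝ)^(-(1:ℝ)/γ) < |ψ N ω k x| ∧
      (N:ℝ)^(-(1:ℝ)/γ) < |ψ N ω k y|} with hbaddef
  -- Step 1 : measure bound on the bad events
  have hμbad : ∀ N : ℕ, 2 ≤ N → μ (bad N) ≤ ENNReal.ofReal (term N) := by
    intro N hN2
    have hN0 : (0:ℝ) < N := by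
      have : (2:ℝ) ≤ (N:ℝ) := by exact_mod_cast hN2
      linarith
    set aN : ℝ := (N:ℝ)^(-(1:ℝ)/γ) with haN
    have haN0 : 0 < aN := Real.rpow_pos_of_pos hN0 _
    set ε : ℝ := aN^2 with hεdef
    have hε0 : 0 < ε := by rw [hεdef]; positivity
    set g : ℕ → ℕ → Ω → ℝ := fun x y ω => ∑ k ∈ (Finset.Icc 1 (N-1)).filter
      (fun k : ℕ => (N:ℝ)^((1:ℝ)-α) < (k:ℝ)), |ψ N ω k x * ψ N ω k y| with hgdef
    have hg_nonneg : ∀ x y ω, 0 ≤ g x y ω := fun x y ω =>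
      Finset.sum_nonneg fun k _ => abs_nonneg _
    have hg_meas : ∀ x, x ∈ Finset.Icc 1 N → ∀ y, y ∈ Finset.Icc 1 N →
        Measurable (g x y) := by
      intro x hx y hy
      have hxN := (Finset.mem_Icc.mp hx).2
      have hyN := (Finset.mem_Icc.mp hy).2
      have hrw : g x y = fun ω => ∑ k ∈ (Finset.Icc 1 (N-1)).filter
          (fun k : ℕ => (N:ℝ)^((1:ℝ)-α) < (k:ℝ)),
          |Stmt17Aux.pseq ((W N ω k)^2) (fun i => m i ω) x * Stmt17Aux.pseq ((W N ω k)^2) (fun i => m i ω) y /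
            (∑ z ∈ Finset.Icc 1 N, m z ω * Stmt17Aux.pseq ((W N ω k)^2) (fun i => m i ω) z ^ 2)| := by
        funext ω
        rw [hgdef]
        refine Finset.sum_congr rfl fun k hk => ?_
        obtain ⟨hk1, hk2⟩ := Finset.mem_Icc.mp (Finset.mem_filter.mp hk).1
        rw [Stmt17Aux.psi_mul (heigen N hN2 ω) (fun z => hmlow ω z) hm0 (by omega) hk2 hxN hyN]
      rw [hrw]
      apply Finset.measurable_sum
      intro k hk
      obtain ⟨hk1, hk2⟩ := Finset.mem_Icc.mp (Finset.mem_filter.mp hk).1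
      have hlamk : Measurable fun ω => (W N ω k)^2 :=
        Stmt17Aux.lam_meas hN2 m hmeas hmpos (fun ω => ψ N ω) (fun ω => W N ω)
          (heigen N hN2) (hsorted N hN2) k hk1 hk2
      have hps : ∀ z, Measurable fun ω => Stmt17Aux.pseq ((W N ω k)^2) (fun i => m i ω) z :=
        Stmt17Aux.pseq_meas m hmeas _ hlamk
      have hS : Measurable fun ω =>
          ∑ z ∈ Finset.Icc 1 N, m z ω * Stmt17Aux.pseq ((W N ω k)^2) (fun i => m i ω) z ^ 2 :=
        Finset.measurable_sum _ fun z _ => (hmeas z).mul ((hps z).pow_const 2)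
      exact (((hps x).mul (hps y)).div hS).abs
    have hg_int : ∀ x, x ∈ Finset.Icc 1 N → ∀ y, y ∈ Finset.Icc 1 N →
        Integrable (g x y) μ := by
      intro x hx y hy
      apply Integrable.mono' (integrable_const (((N:ℝ) - 1) * (1/mminus)))
        (hg_meas x hx y hy).aestronglyMeasurable
      apply ae_of_all
      intro ω
      rw [Real.norm_eq_abs, abs_of_nonneg (hg_nonneg x y ω)]
      have hterm1 : ∀ k ∈ (Finset.Icc 1 (N-1)).filter
          (fun k : ℕ => (N:ℝ)^((1:ℝ)-α) < (k:ℝ)), |ψ N ω k x * ψ N ω k y| ≤ 1/mminus := by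
        intro k hk
        obtain ⟨hk1, hk2⟩ := Finset.mem_Icc.mp (Finset.mem_filter.mp hk).1
        have hx2 := Stmt17Aux.psi_sq_le (heigen N hN2 ω) (fun z => hmlow ω z) hm0 hk2 hx
        have hy2 := Stmt17Aux.psi_sq_le (heigen N hN2 ω) (fun z => hmlow ω z) hm0 hk2 hy
        rw [abs_mul]
        nlinarith [abs_nonneg (ψ N ω k x), abs_nonneg (ψ N ω k y), sq_abs (ψ N ω k x),
          sq_abs (ψ N ω k y), sq_nonneg (|ψ N ω k x| - |ψ N ω k y|)]
      have hcard1 : (((Finset.Icc 1 (N-1)).filter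
          (fun k : ℕ => (N:ℝ)^((1:ℝ)-α) < (k:ℝ))).card : ℝ) ≤ (N:ℝ) - 1 := by
        have h1 : ((Finset.Icc 1 (N-1)).filter
            (fun k : ℕ => (N:ℝ)^((1:ℝ)-α) < (k:ℝ))).card ≤ N - 1 := by
          refine le_trans (Finset.card_filter_le _ _) ?_
          rw [Nat.card_Icc]; omega
        calc (((Finset.Icc 1 (N-1)).filter
            (fun k : ℕ => (N:ℝ)^((1:ℝ)-α) < (k:ℝ))).card : ℝ) ≤ ((N - 1 : ℕ) : ℝ) :=
              Nat.cast_le.mpr h1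
          _ = (N:ℝ) - 1 := by rw [Nat.cast_sub (by omega : 1 ≤ N)]; norm_num
      calc g x y ω ≤ ∑ k ∈ (Finset.Icc 1 (N-1)).filter
            (fun k : ℕ => (N:ℝ)^((1:ℝ)-α) < (k:ℝ)), 1/mminus := Finset.sum_le_sum hterm1
        _ = (((Finset.Icc 1 (N-1)).filter
            (fun k : ℕ => (N:ℝ)^((1:ℝ)-α) < (k:ℝ))).card : ℝ) * (1/mminus) := by
              rw [Finset.sum_const, nsmul_eq_mul]
        _ ≤ ((N:ℝ) - 1) * (1/mminus) := by
              apply mul_le_mul_of_nonneg_right hcard1 (by positivity)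
    have hεinv : ε⁻¹ = (N:ℝ)^((2:ℝ)/γ) := by
      rw [hεdef, haN]
      rw [← Real.rpow_natCast ((N:ℝ)^(-(1:ℝ)/γ)) 2, ← Real.rpow_mul hN0.le,
        ← Real.rpow_neg hN0.le]
      norm_num
      congr 1
      ring
    have hmark : ∀ x, x ∈ Finset.Icc 1 N → ∀ y, y ∈ Finset.Icc 1 N →
        (N:ℝ)^γ < |(x:ℝ) - (y:ℝ)| →
        μ {ω | ε ≤ g x y ω} ≤
          ENNReal.ofReal (C * Real.exp (-c * (N:ℝ)^δ) * (N:ℝ)^((2:ℝ)/γ)) := by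
      intro x hx y hy hfar
      have hmk := mul_meas_ge_le_integral_of_nonneg (ae_of_all μ (hg_nonneg x y))
        (hg_int x hx y hy) ε
      have hint_le : ∫ ω, g x y ω ∂μ
          ≤ C * Real.exp (-c * |(x:ℝ) - (y:ℝ)| / (N:ℝ)^(2*α)) := hloc N hN2 x hx y hy
      have hexp_le : C * Real.exp (-c * |(x:ℝ) - (y:ℝ)| / (N:ℝ)^(2*α))
          ≤ C * Real.exp (-c * (N:ℝ)^δ) := by
        apply mul_le_mul_of_nonneg_left _ hC.le
        apply Real.exp_le_exp.mpr
        have h2α : (0:ℝ) < (N:ℝ)^(2*α) := Real.rpow_pos_of_pos hN0 _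
        have hnum : -c * |(x:ℝ) - (y:ℝ)| ≤ -c * (N:ℝ)^γ := by nlinarith [hfar.le]
        calc -c * |(x:ℝ) - (y:ℝ)| / (N:ℝ)^(2*α) ≤ -c * (N:ℝ)^γ / (N:ℝ)^(2*α) := by
              gcongr
          _ = -c * ((N:ℝ)^γ / (N:ℝ)^(2*α)) := by ring
          _ = -c * (N:ℝ)^δ := by rw [hδdef, Real.rpow_sub hN0]
      have hto : (μ {ω | ε ≤ g x y ω}).toReal ≤ (C * Real.exp (-c * (N:ℝ)^δ)) / ε := by
        rw [le_div_iff₀ hε0]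
        calc (μ {ω | ε ≤ g x y ω}).toReal * ε = ε * (μ {ω | ε ≤ g x y ω}).toReal :=
              mul_comm _ _
          _ ≤ ∫ ω, g x y ω ∂μ := hmk
          _ ≤ _ := le_trans hint_le hexp_le
      calc μ {ω | ε ≤ g x y ω}
          = ENNReal.ofReal ((μ {ω | ε ≤ g x y ω}).toReal) :=
            (ENNReal.ofReal_toReal (measure_ne_top μ _)).symm
        _ ≤ ENNReal.ofReal ((C * Real.exp (-c * (N:ℝ)^δ)) / ε) := ENNReal.ofReal_le_ofReal hto
        _ = ENNReal.ofReal (C * Real.exp (-c * (N:ℝ)^δ) * (N:ℝ)^((2:ℝ)/γ)) := by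
            rw [div_eq_mul_inv, hεinv]
    set pairs : Finset (ℕ × ℕ) := (Finset.Icc 1 N ×ˢ Finset.Icc 1 N).filter
      (fun p => (N:ℝ)^γ < |(p.1:ℝ) - (p.2:ℝ)|) with hpairsdef
    have hsub : bad N ⊆ ⋃ p ∈ pairs, {ω | ε ≤ g p.1 p.2 ω} := by
      intro ω hω
      rw [hbaddef] at hω
      obtain ⟨k, hk, x, hx, y, hy, hfar, h1, h2⟩ := hω
      have hp : (x, y) ∈ pairs := by
        rw [hpairsdef, Finset.mem_filter, Finset.mem_product]
        exact ⟨⟨hx, hy⟩, hfar⟩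
      refine Set.mem_biUnion hp ?_
      have hbound : ε ≤ |ψ N ω k x * ψ N ω k y| := by
        rw [abs_mul, hεdef]
        have := mul_lt_mul'' h1 h2 haN0.le haN0.le
        nlinarith [this]
      exact le_trans hbound (Finset.single_le_sum (fun j _ => abs_nonneg
        (ψ N ω j x * ψ N ω j y)) hk)
    have hcard : pairs.card ≤ N * N := by
      refine le_trans (Finset.card_filter_le _ _) ?_
      rw [Finset.card_product, Nat.card_Icc, Nat.add_sub_cancel]
    calc μ (bad N) ≤ μ (⋃ p ∈ pairs, {ω | ε ≤ g p.1 p.2 ω}) := measure_mono hsub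
      _ ≤ ∑ p ∈ pairs, μ {ω | ε ≤ g p.1 p.2 ω} := measure_biUnion_finset_le _ _
      _ ≤ ∑ _p ∈ pairs, ENNReal.ofReal (C * Real.exp (-c * (N:ℝ)^δ) * (N:ℝ)^((2:ℝ)/γ)) := by
          refine Finset.sum_le_sum fun p hp => ?_
          rw [hpairsdef, Finset.mem_filter, Finset.mem_product] at hp
          exact hmark p.1 hp.1.1 p.2 hp.1.2 hp.2
      _ = pairs.card • ENNReal.ofReal (C * Real.exp (-c * (N:ℝ)^δ) * (N:ℝ)^((2:ℝ)/γ)) :=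
          Finset.sum_const _
      _ ≤ (N * N) • ENNReal.ofReal (C * Real.exp (-c * (N:ℝ)^δ) * (N:ℝ)^((2:ℝ)/γ)) := by
          rw [nsmul_eq_mul, nsmul_eq_mul]
          exact mul_le_mul_left (Nat.cast_le.mpr hcard) _
      _ = ENNReal.ofReal (term N) := by
          rw [nsmul_eq_mul, htermdef]
          rw [← ENNReal.ofReal_natCast (N * N), ← ENNReal.ofReal_mul (by positivity)]
          congr 1
          push_cast
          ring
  -- Step 2 : summability of the bounds
  have hsummable : Summable term := by
    have h1 : Tendsto (fun u : ℝ => u ^ ((4 + 2/γ)/δ) / Real.exp (c * u)) atTop (𝓝 0) :=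
      (isLittleO_rpow_exp_pos_mul_atTop ((4 + 2/γ)/δ) hc).tendsto_div_nhds_zero
    have h2 : Tendsto (fun N : ℕ => (N:ℝ)^δ) atTop atTop :=
      (tendsto_rpow_atTop hδ0).comp tendsto_natCast_atTop_atTop
    have h3 := h1.comp h2
    have h4 : Tendsto
        (fun N : ℕ => C * (((N:ℝ)^δ) ^ ((4 + 2/γ)/δ) / Real.exp (c * (N:ℝ)^δ)))
        atTop (𝓝 0) := by
      have := h3.const_mul C
      simpa using this
    have heq : ∀ᶠ N : ℕ in atTop, term N * (N:ℝ)^(2:ℝ)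
        = C * (((N:ℝ)^δ) ^ ((4 + 2/γ)/δ) / Real.exp (c * (N:ℝ)^δ)) := by
      filter_upwards [eventually_ge_atTop 1] with N hN1
      have hN0 : (0:ℝ) < N := by exact_mod_cast hN1
      have hA : ((N:ℝ)^δ) ^ ((4 + 2/γ)/δ) = (N:ℝ) ^ ((4:ℝ) + 2/γ) := by
        rw [← Real.rpow_mul hN0.le]
        congr 1
        rw [mul_comm]
        exact div_mul_cancel₀ _ hδ0.ne'
      have hB : (N:ℝ) ^ ((4:ℝ) + 2/γ)
          = (N:ℝ) ^ ((2:ℝ)/γ) * (N:ℝ)^(2:ℕ) * (N:ℝ)^(2:ℕ) := by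
        rw [← Real.rpow_natCast (N:ℝ) 2, ← Real.rpow_add hN0, ← Real.rpow_add hN0]
        congr 1
        push_cast
        ring
      have hC2 : Real.exp (c * (N:ℝ)^δ) = (Real.exp (-c * (N:ℝ)^δ))⁻¹ := by
        rw [← Real.exp_neg]
        congr 1
        ring
      rw [hA, hB, hC2, htermdef]
      have hexp0 : Real.exp (-c * (N:ℝ)^δ) ≠ 0 := (Real.exp_pos _).ne'
      have hrp : (N:ℝ)^(2:ℝ) = (N:ℝ)^(2:ℕ) := by
        rw [← Real.rpow_natCast (N:ℝ) 2]
        norm_num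
      rw [hrp]
      field_simp
    have htt : Tendsto (fun N : ℕ => term N * (N:ℝ)^(2:ℝ)) atTop (𝓝 0) := by
      apply Filter.Tendsto.congr' _ h4
      filter_upwards [heq] with N hNe
      exact hNe.symm
    have hev : ∀ᶠ N : ℕ in atTop, term N ≤ ((N:ℝ)^(2:ℝ))⁻¹ := by
      filter_upwards [htt.eventually_le_const (by norm_num : (0:ℝ) < 1),
        eventually_ge_atTop 1] with N h1' h2'
      have hN0 : (0:ℝ) < N := by exact_mod_cast h2'
      have hp : (0:ℝ) < (N:ℝ)^(2:ℝ) := Real.rpow_pos_of_pos hN0 _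
      rw [← one_div, le_div_iff₀ hp]
      exact h1'
    have hbase : Summable (fun N : ℕ => ((N:ℝ)^(2:ℝ))⁻¹) :=
      Real.summable_nat_rpow_inv.mpr one_lt_two
    apply summable_of_isBigO_nat hbase
    apply Asymptotics.IsBigO.of_bound 1
    filter_upwards [hev] with N h1'
    rw [one_mul, Real.norm_eq_abs, Real.norm_eq_abs, abs_of_nonneg (hterm_nonneg N),
      abs_of_nonneg (by positivity)]
    exact h1'
  -- Step 3 : Borel--Cantelli
  have hle : ∀ N, μ (bad N) ≤ ENNReal.ofReal (term N) := by
    intro N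
    rcases lt_or_ge N 2 with h2 | h2
    · have hempty : bad N = ∅ := by
        apply Set.eq_empty_iff_forall_notMem.mpr
        intro ω hω
        rw [hbaddef] at hω
        obtain ⟨k, hk, -⟩ := hω
        have hmem := Finset.mem_Icc.mp (Finset.mem_filter.mp hk).1
        omega
      rw [hempty, measure_empty]
      exact zero_le
    · exact hμbad N h2
  have htsum : (∑' N, μ (bad N)) ≠ ⊤ :=
    ne_top_of_le_ne_top ENNReal.ofReal_ne_top
      (le_trans (ENNReal.tsum_le_tsum hle)
        (le_of_eq (ENNReal.ofReal_tsum_of_nonneg hterm_nonneg hsummable).symm))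
  have hzero := measure_limsup_atTop_eq_zero htsum
  have hae : ∀ᵐ ω ∂μ, ω ∉ limsup bad atTop := by
    rw [ae_iff]
    simp only [not_not]
    exact hzero
  -- Step 4 : conclusion
  filter_upwards [hae] with ω hω
  rw [mem_limsup_iff_frequently_mem, Filter.not_frequently] at hω
  obtain ⟨N₀, hN₀⟩ := Filter.eventually_atTop.mp hω
  refine ⟨max N₀ 2, fun N hN k hk => ?_⟩
  have hN2 : 2 ≤ N := le_trans (le_max_right _ _) hN
  have hnotbad : ω ∉ bad N := hN₀ N (le_trans (le_max_left _ _) hN)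
  by_cases hex : ∃ x ∈ Finset.Icc 1 N, (N:ℝ)^(-(1:ℝ)/γ) < |ψ N ω k x|
  · obtain ⟨x', hx', hgt⟩ := hex
    refine ⟨(x' : ℝ), fun x hx1 hx2 hfar => ?_⟩
    by_contra hcon
    push_neg at hcon
    apply hnotbad
    rw [hbaddef]
    exact ⟨k, hk, x', hx', x, Finset.mem_Icc.mpr ⟨hx1, hx2⟩, (by rwa [abs_sub_comm]),
      hgt, hcon⟩
  · push_neg at hex
    exact ⟨0, fun x hx1 hx2 _ => hex x (Finset.mem_Icc.mpr ⟨hx1, hx2⟩)⟩
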